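/- In the Artin group G = ⟨a, x | (ax)^k = (xa)^k⟩ (edge label 2k), write a_i = x^i a x^{-i} and σ_a = a_0 a_1 ⋯ a_{k-1}. Then for every l ∈ ℤ, a_l = σ_a^{-q} a_r σ_a^{q}, where l = kq + r with 0 ≤ r < k. -/

import Mathlib

/-- An Artin graph: a simplicial graph with even/arbitrary labels; `m u v = 0`
means `u` and `v` are not joined by an edge, otherwise `m u v ≥ 2` is the label. -/
structure ArtinGraph (V : Type) where
  m : V → V → ℕ
  symm : ∀ u v, m u v = m v u
  loopless : ∀ v, m v v = 0
  ne_one : ∀ u v, m u v ≠ 1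

namespace ArtinGraph

variable {V : Type}

/-- `word u v n` is the prefix of length `n` of the alternating word `uvuv…`. -/
def word : V → V → ℕ → FreeGroup V
  | _, _, 0 => 1
  | u, v, n + 1 => FreeGroup.of u * word v u n

/-- The Artin relations of the graph. -/
def rels (Γ : ArtinGraph V) : Set (FreeGroup V) :=
  {r | ∃ u v, Γ.m u v ≠ 0 ∧ r = word u v (Γ.m u v) * (word v u (Γ.m u v))⁻¹}

/-- The Artin group of an Artin graph. -/
def ArtinGroup (Γ : ArtinGraph V) : Type := PresentedGroup Γ.rels

instance (Γ : ArtinGraph V) : Group Γ.ArtinGroup :=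
  inferInstanceAs (Group (PresentedGroup Γ.rels))

/-- The generator of the Artin group corresponding to a vertex. -/
def gen (Γ : ArtinGraph V) (v : V) : Γ.ArtinGroup := PresentedGroup.of v

/-- The standard parabolic subgroup on a set `S` of vertices. -/
def std (Γ : ArtinGraph V) (S : Set V) : Subgroup Γ.ArtinGroup :=
  Subgroup.closure (Γ.gen '' S)

/-- The conjugate `g H g⁻¹` of a subgroup. -/
def conjP {G : Type*} [Group G] (g : G) (H : Subgroup G) : Subgroup G :=
  H.map (MulAut.conj g).toMonoidHom

/-- A parabolic subgroup is a conjugate of a standard parabolic subgroup. -/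
def IsParabolic (Γ : ArtinGraph V) (P : Subgroup Γ.ArtinGroup) : Prop :=
  ∃ (S : Set V) (g : Γ.ArtinGroup), P = conjP g (Γ.std S)

/-- An Artin graph is even if all labels are even. -/
def IsEven (Γ : ArtinGraph V) : Prop := ∀ u v, Even (Γ.m u v)

/-- The FC condition for even Artin graphs: in every triangle at least two of
the three labels are equal to `2`. -/
def IsFC (Γ : ArtinGraph V) : Prop :=
  ∀ u v w, Γ.m u v ≠ 0 → Γ.m v w ≠ 0 → Γ.m w u ≠ 0 →
    (Γ.m u v = 2 ∧ Γ.m v w = 2) ∨ (Γ.m v w = 2 ∧ Γ.m w u = 2) ∨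
      (Γ.m u v = 2 ∧ Γ.m w u = 2)

/-- The link of a vertex. -/
def lk (Γ : ArtinGraph V) (x : V) : Set V := {u | Γ.m x u ≠ 0}

/-- The star of a vertex. -/
def star (Γ : ArtinGraph V) (x : V) : Set V := insert x (Γ.lk x)

end ArtinGraph

open ArtinGraph in
/-- The even Artin graph on two vertices `a = false`, `x = true`, label `2k`. -/
def edgeGraph (k : ℕ) : ArtinGraph Bool where
  m u v := if u = v then 0 else 2 * k
  symm u v := by rcases u <;> rcases v <;> rfl
  loopless v := by simp
  ne_one u v := by rcases u <;> rcases v <;> simp <;> omega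

open ArtinGraph in
/-- `a_i = xⁱ a x⁻ⁱ` in the dihedral Artin group. -/
def aSub (k : ℕ) (i : ℤ) : (edgeGraph k).ArtinGroup :=
  ((edgeGraph k).gen true) ^ i * (edgeGraph k).gen false *
    (((edgeGraph k).gen true) ^ i)⁻¹

open ArtinGraph in
/-- `σ_a = a_0 a_1 ⋯ a_{k-1}`. -/
def sigmaA (k : ℕ) : (edgeGraph k).ArtinGroup :=
  ((List.range k).map fun i => aSub k (i : ℤ)).prod


open ArtinGraph

private def AA (k : ℕ) : (edgeGraph k).ArtinGroup := (edgeGraph k).gen false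
private def XX (k : ℕ) : (edgeGraph k).ArtinGroup := (edgeGraph k).gen true

private lemma word_two_mul (u v : Bool) (k : ℕ) :
    word u v (2 * k) = (FreeGroup.of u * FreeGroup.of v) ^ k := by
  induction k generalizing u v with
  | zero => rfl
  | succ n ih =>
    have h2 : 2 * (n+1) = (2*n) + 1 + 1 := by ring
    rw [h2]
    show FreeGroup.of u * (FreeGroup.of v * word u v (2*n)) = _
    rw [ih u v, pow_succ']
    group

private lemma rel_holds (k : ℕ) (hk : 1 ≤ k) :
    (AA k * XX k) ^ k = (XX k * AA k) ^ k := by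
  have hmem : word false true (2*k) * (word true false (2*k))⁻¹ ∈ (edgeGraph k).rels := by
    refine ⟨false, true, ?_, ?_⟩ <;> simp [edgeGraph]; omega
  have h1 : PresentedGroup.mk (edgeGraph k).rels
      (word false true (2*k) * (word true false (2*k))⁻¹) = 1 := by
    exact PresentedGroup.one_of_mem hmem
  have h2 : PresentedGroup.mk (edgeGraph k).rels (word false true (2*k))
      = PresentedGroup.mk (edgeGraph k).rels (word true false (2*k)) := by
    rw [map_mul, map_inv] at h1
    exact mul_inv_eq_one.mp h1
  simp [word_two_mul, map_pow, map_mul, AA, XX, gen, PresentedGroup.of] at h2 ⊢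
  exact h2

private lemma swap_pow {G : Type*} [Group G] (a x : G) (n : ℕ) :
    x * (a * x) ^ n = (x * a) ^ n * x := by
  induction n with
  | zero => simp
  | succ n ih =>
    rw [pow_succ' (a*x), pow_succ' (x*a)]
    calc x * ((a*x) * (a*x)^n) = (x*a) * (x * (a*x)^n) := by simp [mul_assoc]
      _ = (x*a) * ((x*a)^n * x) := by rw [ih]
      _ = ((x*a) * (x*a)^n) * x := by simp [mul_assoc]

private lemma central (k : ℕ) (hk : 1 ≤ k) (g : (edgeGraph k).ArtinGroup) :
    Commute ((AA k * XX k) ^ k) g := by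
  have hX : Commute ((AA k * XX k) ^ k) (XX k) := by
    have h := swap_pow (AA k) (XX k) k
    rw [← rel_holds k hk] at h
    exact h.symm
  have hA : Commute ((AA k * XX k) ^ k) (AA k) := by
    have h := swap_pow (XX k) (AA k) k
    rw [← rel_holds k hk] at h
    exact h.symm
  have htop : g ∈ Subgroup.closure
      (Set.range (PresentedGroup.of : Bool → PresentedGroup (edgeGraph k).rels)) := by
    rw [PresentedGroup.closure_range_of]; trivial
  induction htop using Subgroup.closure_induction with
  | mem x hx =>
    obtain ⟨b, rfl⟩ := hx
    cases b
    · exact hA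
    · exact hX
  | one => exact Commute.one_right _
  | mul x y _ _ hx hy => exact hx.mul_right hy
  | inv x _ hx => exact hx.inv_right

private lemma sigma_eq (k : ℕ) :
    sigmaA k = ((AA k * XX k) ^ k) * XX k ^ (-(k : ℤ)) := by
  have h : ∀ n : ℕ, ((List.range n).map fun i : ℕ => aSub k (i : ℤ)).prod
      = ((AA k * XX k) ^ n) * XX k ^ (-(n : ℤ)) := by
    intro n
    induction n with
    | zero => simp
    | succ n ih =>
      rw [List.range_succ, List.map_append, List.prod_append, ih]
      simp only [List.map_cons, List.map_nil, List.prod_cons, List.prod_nil, mul_one]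
      rw [aSub]
      simp only [AA, XX]
      push_cast
      rw [pow_succ, show (-(n+1:ℤ)) = -(n:ℤ) + (-1) from by ring, zpow_add]
      group
  unfold sigmaA
  have hb : (do let a ← List.range k; pure ((a : ℕ) : ℤ)) = (List.range k).map (fun a : ℕ => (a : ℤ)) := by
    induction (List.range k) with
    | nil => rfl
    | cons a t ih => simp_all [List.flatMap]
  rw [hb, List.map_map]
  exact h k

private lemma conj_aux {G : Type*} [Group G] (c y g : G) (h : Commute c (y * g)) :
    (c⁻¹ * y) * g * (c * y⁻¹) = y * g * y⁻¹ := by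
  calc (c⁻¹*y)*g*(c*y⁻¹) = c⁻¹ * ((y*g)*c) * y⁻¹ := by group
    _ = c⁻¹ * (c*(y*g)) * y⁻¹ := by rw [← h.eq]
    _ = y*g*y⁻¹ := by group

open ArtinGraph in
/-- in `G = ⟨a, x ∣ (ax)^k = (xa)^k⟩`, with `a_i = xⁱax⁻ⁱ` and
`σ_a = a_0a_1⋯a_{k-1}`, for every `l = kq + r` with `0 ≤ r < k` one has
`a_l = σ_a^{-q} a_r σ_a^{q}`. -/
theorem stmt12 (k : ℕ) (hk : 1 ≤ k) (l q r : ℤ)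
    (hl : l = k * q + r) (hr0 : 0 ≤ r) (hrk : r < k) :
    aSub k l = (sigmaA k) ^ (-q) * aSub k r * (sigmaA k) ^ q := by
  set z := (AA k * XX k) ^ k with hz
  have hc : forall g, Commute z g := central k hk
  have hcx : Commute z (XX k) := hc _
  have hsig : ∀ m : ℤ, sigmaA k ^ m = z ^ m * XX k ^ (-(k : ℤ) * m) := by
    intro m
    rw [sigma_eq k, ((hcx.zpow_right (-(k:ℤ))).mul_zpow m), ← zpow_mul]
  set y : (edgeGraph k).ArtinGroup := XX k ^ ((k:ℤ) * q) with hy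
  have e1 : sigmaA k ^ (-q) * aSub k r * sigmaA k ^ q = y * aSub k r * y⁻¹ := by
    rw [hsig q, hsig (-q)]
    rw [show -(k:ℤ)*(-q) = (k:ℤ)*q by ring, show (z ^ (-q) : (edgeGraph k).ArtinGroup) = (z^q)⁻¹ from zpow_neg z q, show -(k:ℤ)*q = -((k:ℤ)*q) by ring, zpow_neg]
    exact conj_aux (z^q) y (aSub k r) ((hc _).zpow_left q)
  rw [e1, aSub, aSub, hl, hy]
  simp only [AA, XX]
  group
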